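/- arXiv:2306.01462 — 2 statements merged into one kernel-verified Lean document; each statement's English description precedes it below -/
import Mathlib

section
/- For every real number x, ∑_{k=0}^∞ a_{2k+1} · x^{2k+1}/(2k+1)! = (1/2) ∫₀^∞ (g(x·t)³ − g(−x·t)³) · e^{−t} dt. -/
open MeasureTheory Real

section Aux

/-- Summability of the series defining `g`. -/
lemma summable_g_aux (y : ℝ) : Summable (fun k : ℕ => y ^ k / ((Nat.factorial k : ℝ)) ^ 2) := by
  refine Summable.of_norm_bounded (g := fun k => |y| ^ k / (Nat.factorial k : ℝ))
    (Real.summable_pow_div_factorial |y|) (fun k => ?_)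
  have h1 : (1:ℝ) ≤ (Nat.factorial k : ℝ) := by
    exact_mod_cast Nat.one_le_iff_ne_zero.mpr (Nat.factorial_ne_zero k)
  rw [norm_div, norm_pow, Real.norm_eq_abs, norm_pow, Real.norm_eq_abs, Nat.abs_cast]
  exact div_le_div_of_nonneg_left (by positivity) (by linarith) (by nlinarith)

lemma summable_norm_g_aux (y : ℝ) :
    Summable (fun k : ℕ => ‖y ^ k / ((Nat.factorial k : ℝ)) ^ 2‖) := by
  refine (summable_g_aux |y|).congr fun k => ?_
  simp [norm_div, abs_pow, Nat.abs_cast]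

end Aux

/-- `a k` is the sum of squared multinomial coefficients over all triples
`(k₁,k₂,k₃)` of natural numbers with `k₁+k₂+k₃ = k`. -/
def a (k : ℕ) : ℕ :=
  ∑ p ∈ Finset.Nat.antidiagonalTuple 3 k, (Nat.multinomial Finset.univ p) ^ 2

/-- The entire function `g(y) = ∑ y^k/(k!)²`, so that `g(y) = I₀(2√y)` for `y ≥ 0`. -/
noncomputable def g (y : ℝ) : ℝ := ∑' k : ℕ, y ^ k / ((Nat.factorial k : ℝ)) ^ 2

lemma hasSum_g (y : ℝ) : HasSum (fun k : ℕ => y ^ k / ((Nat.factorial k : ℝ)) ^ 2) (g y) :=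
  (summable_g_aux y).hasSum

lemma hasSum_cube_triple (y : ℝ) :
    HasSum (fun p : ℕ × ℕ × ℕ =>
      (y ^ p.1 / ((Nat.factorial p.1 : ℝ)) ^ 2) *
      ((y ^ p.2.1 / ((Nat.factorial p.2.1 : ℝ)) ^ 2) *
       (y ^ p.2.2 / ((Nat.factorial p.2.2 : ℝ)) ^ 2))) (g y ^ 3) := by
  have hn := summable_norm_g_aux y
  have h := hasSum_g y
  have hinner := h.mul h (hn.mul_norm hn).of_norm
  have houter := h.mul hinner (hn.mul_norm (hn.mul_norm hn)).of_norm
  have h3 : g y ^ 3 = g y * (g y * g y) := by ring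
  rw [h3]
  exact houter

/-- The equivalence between `Fin 3 → ℕ` and `ℕ × ℕ × ℕ`. -/
def e3 : (Fin 3 → ℕ) ≃ ℕ × ℕ × ℕ where
  toFun p := (p 0, p 1, p 2)
  invFun q := ![q.1, q.2.1, q.2.2]
  left_inv p := by
    funext i
    fin_cases i <;> simp
  right_inv q := by simp

lemma hasSum_cube_tuple (y : ℝ) :
    HasSum (fun p : Fin 3 → ℕ =>
      ∏ i, (y ^ p i / ((Nat.factorial (p i) : ℝ)) ^ 2)) (g y ^ 3) := by
  have h := (e3.hasSum_iff (f := fun p : ℕ × ℕ × ℕ =>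
      (y ^ p.1 / ((Nat.factorial p.1 : ℝ)) ^ 2) *
      ((y ^ p.2.1 / ((Nat.factorial p.2.1 : ℝ)) ^ 2) *
       (y ^ p.2.2 / ((Nat.factorial p.2.2 : ℝ)) ^ 2)))).mpr (hasSum_cube_triple y)
  exact h.congr_fun fun p => by simp [e3, Fin.prod_univ_three, mul_assoc]; ring

lemma finset_sum_eq (y : ℝ) (n : ℕ) :
    ∑ p ∈ Finset.Nat.antidiagonalTuple 3 n,
      ∏ i, (y ^ p i / ((Nat.factorial (p i) : ℝ)) ^ 2)
      = (a n : ℝ) * y ^ n / ((Nat.factorial n : ℝ)) ^ 2 := by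
  rw [a]
  push_cast
  rw [Finset.sum_mul, Finset.sum_div]
  refine Finset.sum_congr rfl fun p hp => ?_
  have hsum : ∑ i, p i = n := Finset.Nat.mem_antidiagonalTuple.mp hp
  have hspec : (∏ i, (p i).factorial) * Nat.multinomial Finset.univ p = n.factorial := by
    rw [Nat.multinomial_spec, hsum]
  have hcast : (∏ i, ((p i).factorial : ℝ)) * (Nat.multinomial Finset.univ p : ℝ)
      = (n.factorial : ℝ) := by exact_mod_cast congrArg (Nat.cast : ℕ → ℝ) hspec
  have hP : (0:ℝ) < ∏ i, ((p i).factorial : ℝ) := by positivity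
  have hM : (0:ℝ) < (Nat.multinomial Finset.univ p : ℝ) := by
    exact_mod_cast Nat.multinomial_pos _ _
  rw [Finset.prod_div_distrib, Finset.prod_pow_eq_pow_sum, hsum, Finset.prod_pow, ← hcast]
  field_simp

lemma hasSum_cube (y : ℝ) :
    HasSum (fun n : ℕ => (a n : ℝ) * y ^ n / ((Nat.factorial n : ℝ)) ^ 2) (g y ^ 3) := by
  have h := ((Finset.Nat.sigmaAntidiagonalTupleEquivTuple 3).hasSum_iff
    (f := fun p : Fin 3 → ℕ =>
      ∏ i, (y ^ p i / ((Nat.factorial (p i) : ℝ)) ^ 2))).mpr (hasSum_cube_tuple y)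
  refine HasSum.sigma h (fun n => ?_)
  have hfin := (Finset.Nat.antidiagonalTuple 3 n).hasSum
    (f := fun p : Fin 3 → ℕ => ∏ i, (y ^ p i / ((Nat.factorial (p i) : ℝ)) ^ 2))
  rw [finset_sum_eq] at hfin
  exact hfin

lemma antidiagonalTuple_eq_piAntidiag (n : ℕ) :
    Finset.Nat.antidiagonalTuple 3 n = Finset.piAntidiag (Finset.univ : Finset (Fin 3)) n := by
  ext p
  simp [Finset.Nat.mem_antidiagonalTuple, Finset.mem_piAntidiag]

lemma sum_multinomial (n : ℕ) :
    ∑ p ∈ Finset.Nat.antidiagonalTuple 3 n, Nat.multinomial Finset.univ p = 3 ^ n := by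
  have h := Finset.sum_pow_eq_sum_piAntidiag (Finset.univ : Finset (Fin 3)) (fun _ => (1:ℕ)) n
  simp at h
  rw [antidiagonalTuple_eq_piAntidiag]
  exact h.symm

lemma a_le (n : ℕ) : a n ≤ 9 ^ n := by
  have hb : ∀ p ∈ Finset.Nat.antidiagonalTuple 3 n, Nat.multinomial Finset.univ p ≤ 3 ^ n := by
    intro p hp
    rw [← sum_multinomial n]
    exact Finset.single_le_sum (fun q _ => Nat.zero_le _) hp
  calc a n = ∑ p ∈ Finset.Nat.antidiagonalTuple 3 n, (Nat.multinomial Finset.univ p) ^ 2 := rfl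
    _ ≤ ∑ p ∈ Finset.Nat.antidiagonalTuple 3 n, 3 ^ n * Nat.multinomial Finset.univ p := by
        refine Finset.sum_le_sum fun p hp => ?_
        rw [pow_two]
        exact Nat.mul_le_mul_right _ (hb p hp)
    _ = 3 ^ n * ∑ p ∈ Finset.Nat.antidiagonalTuple 3 n, Nat.multinomial Finset.univ p := by
        rw [Finset.mul_sum]
    _ = 3 ^ n * 3 ^ n := by rw [sum_multinomial]
    _ = 9 ^ n := by rw [← mul_pow]; norm_num

lemma summable_a (y : ℝ) :
    Summable (fun n : ℕ => (a n : ℝ) * y ^ n / (Nat.factorial n : ℝ)) := by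
  refine Summable.of_norm_bounded (g := fun n => (9 * |y|) ^ n / (Nat.factorial n : ℝ))
    (Real.summable_pow_div_factorial _) (fun n => ?_)
  have h1 : (0:ℝ) < (Nat.factorial n : ℝ) := by positivity
  rw [norm_div, Real.norm_eq_abs, Real.norm_eq_abs, Nat.abs_cast, abs_mul, Nat.abs_cast, abs_pow]
  simp only [mul_pow]
  gcongr
  exact_mod_cast a_le n

lemma integrableOn_pow_exp (n : ℕ) :
    IntegrableOn (fun t : ℝ => t ^ n * Real.exp (-t)) (Set.Ioi 0) := by
  have h := Real.GammaIntegral_convergent (s := (n : ℝ) + 1) (by positivity)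
  simp only [add_sub_cancel_right] at h
  refine h.congr_fun ?_ measurableSet_Ioi
  intro t ht
  rw [Set.mem_Ioi] at ht
  show Real.exp (-t) * t ^ ((n : ℝ)) = t ^ n * Real.exp (-t)
  rw [Real.rpow_natCast]
  ring

lemma integral_pow_exp (n : ℕ) :
    ∫ t in Set.Ioi (0:ℝ), t ^ n * Real.exp (-t) = (Nat.factorial n : ℝ) := by
  have h := Real.Gamma_eq_integral (s := (n : ℝ) + 1) (by positivity)
  rw [Real.Gamma_nat_eq_factorial] at h
  simp only [add_sub_cancel_right] at h
  rw [h]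
  refine setIntegral_congr_fun measurableSet_Ioi fun t ht => ?_
  rw [Set.mem_Ioi] at ht
  show t ^ n * Real.exp (-t) = Real.exp (-t) * t ^ ((n : ℝ))
  rw [Real.rpow_natCast]
  ring

lemma F_integrable (y : ℝ) (n : ℕ) :
    IntegrableOn (fun t : ℝ => ((a n : ℝ) * (y * t) ^ n / ((Nat.factorial n : ℝ)) ^ 2)
      * Real.exp (-t)) (Set.Ioi 0) := by
  have h : IntegrableOn (fun t : ℝ => ((a n : ℝ) * y ^ n / ((Nat.factorial n : ℝ)) ^ 2)
      * (t ^ n * Real.exp (-t))) (Set.Ioi 0) :=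
    (integrableOn_pow_exp n).const_mul _
  refine h.congr_fun (fun t ht => ?_) measurableSet_Ioi
  rw [mul_pow]
  ring

lemma F_integral (y : ℝ) (n : ℕ) :
    ∫ t in Set.Ioi (0:ℝ), ((a n : ℝ) * (y * t) ^ n / ((Nat.factorial n : ℝ)) ^ 2) * Real.exp (-t)
      = (a n : ℝ) * y ^ n / (Nat.factorial n : ℝ) := by
  have h : ∀ t : ℝ, ((a n : ℝ) * (y * t) ^ n / ((Nat.factorial n : ℝ)) ^ 2) * Real.exp (-t)
      = ((a n : ℝ) * y ^ n / ((Nat.factorial n : ℝ)) ^ 2) * (t ^ n * Real.exp (-t)) := by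
    intro t; rw [mul_pow]; ring
  simp_rw [h]
  rw [integral_const_mul, integral_pow_exp]
  have h1 : (0:ℝ) < (Nat.factorial n : ℝ) := by positivity
  field_simp

lemma F_norm_integral (y : ℝ) (n : ℕ) :
    ∫ t in Set.Ioi (0:ℝ),
        ‖((a n : ℝ) * (y * t) ^ n / ((Nat.factorial n : ℝ)) ^ 2) * Real.exp (-t)‖
      = (a n : ℝ) * |y| ^ n / (Nat.factorial n : ℝ) := by
  rw [← F_integral |y| n]
  refine setIntegral_congr_fun measurableSet_Ioi fun t ht => ?_
  rw [Set.mem_Ioi] at ht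
  rw [norm_mul, norm_div, Real.norm_eq_abs (Real.exp _), abs_of_pos (Real.exp_pos _),
    Real.norm_eq_abs, Real.norm_eq_abs, abs_mul, Nat.abs_cast, abs_pow, abs_mul,
    abs_of_pos ht, abs_of_nonneg (by positivity : (0:ℝ) ≤ ((Nat.factorial n : ℝ)) ^ 2), mul_pow]

/-- Pointwise: the odd part of the cube series. -/
lemma hasSum_odd_pointwise (x t : ℝ) :
    HasSum (fun k : ℕ => ((a (2 * k + 1) : ℝ) * (x * t) ^ (2 * k + 1)
        / ((Nat.factorial (2 * k + 1) : ℝ)) ^ 2) * Real.exp (-t))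
      ((g (x * t) ^ 3 - g (-(x * t)) ^ 3) * Real.exp (-t) * (1 / 2)) := by
  have h1 := hasSum_cube (x * t)
  have h2 := hasSum_cube (-(x * t))
  have h3 := (h1.sub h2).mul_right (Real.exp (-t) * (1 / 2))
  rw [← mul_assoc] at h3
  have hi : Function.Injective (fun k : ℕ => 2 * k + 1) := fun k l h => by
    have : 2 * k + 1 = 2 * l + 1 := h
    omega
  rw [← Function.Injective.hasSum_iff hi ?side] at h3
  · refine h3.congr_fun fun k => ?_
    simp only [Function.comp]
    have hodd : Odd (2 * k + 1) := ⟨k, by ring⟩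
    rw [hodd.neg_pow]
    ring
  · intro n hn
    have hev : Even n := by
      rcases Nat.even_or_odd n with h | h
      · exact h
      · obtain ⟨c, hc⟩ := h
        exact absurd ⟨c, show 2 * c + 1 = n by omega⟩ hn
    simp only [hev.neg_pow]
    ring

/-- Odd-index exponential generating function of `a`. -/
theorem egf_a_odd_eq_integral (x : ℝ) :
    HasSum (fun k : ℕ => (a (2 * k + 1) : ℝ) * x ^ (2 * k + 1) / (Nat.factorial (2 * k + 1) : ℝ))
      ((1 / 2) * ∫ t in Set.Ioi (0:ℝ),
        (g (x * t) ^ 3 - g (-(x * t)) ^ 3) * Real.exp (-t)) := by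
  have hi : Function.Injective (fun k : ℕ => 2 * k + 1) := fun k l h => by
    have : 2 * k + 1 = 2 * l + 1 := h
    omega
  have hsum : Summable (fun k : ℕ =>
      (a (2 * k + 1) : ℝ) * |x| ^ (2 * k + 1) / (Nat.factorial (2 * k + 1) : ℝ)) :=
    (summable_a |x|).comp_injective hi
  have h := hasSum_integral_of_summable_integral_norm
    (μ := volume.restrict (Set.Ioi 0))
    (F := fun k t => ((a (2 * k + 1) : ℝ) * (x * t) ^ (2 * k + 1)
        / ((Nat.factorial (2 * k + 1) : ℝ)) ^ 2) * Real.exp (-t))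
    (fun k => F_integrable x (2 * k + 1))
    (by
      refine hsum.congr fun k => ?_
      exact (F_norm_integral x (2 * k + 1)).symm)
  have heq : (∫ t in Set.Ioi (0:ℝ), ∑' k : ℕ, ((a (2 * k + 1) : ℝ) * (x * t) ^ (2 * k + 1)
        / ((Nat.factorial (2 * k + 1) : ℝ)) ^ 2) * Real.exp (-t))
      = (1 / 2) * ∫ t in Set.Ioi (0:ℝ),
          (g (x * t) ^ 3 - g (-(x * t)) ^ 3) * Real.exp (-t) := by
    rw [show ((1:ℝ)/2) * ∫ t in Set.Ioi (0:ℝ),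
          (g (x * t) ^ 3 - g (-(x * t)) ^ 3) * Real.exp (-t)
        = ∫ t in Set.Ioi (0:ℝ),
            (g (x * t) ^ 3 - g (-(x * t)) ^ 3) * Real.exp (-t) * (1 / 2) from by
      rw [integral_mul_const]; ring]
    refine setIntegral_congr_fun measurableSet_Ioi fun t _ => ?_
    exact (hasSum_odd_pointwise x t).tsum_eq
  rw [heq] at h
  refine h.congr_fun fun k => ?_
  exact (F_integral x (2 * k + 1)).symm
end

section
/- The function F : ℝ → ℝ defined for x ≥ 0 by F(x) := ∫₀^∞ e^{−3x−t} · g(x·t)³ dt is three times differentiable on (0,∞) and is annihilated there by the third-order differential operator A_x = x²D³ − (x²−3x)D² − (24x²+2x−1)D − (36x²+24x); i.e., for all x > 0: x²·F'''(x) − (x²−3x)·F''(x) − (24x²+2x−1)·F'(x) − (36x²+24x)·F(x) = 0. -/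
open MeasureTheory Real

/-- `F(x) = ∫₀^∞ e^{−3x−t} I₀³(2√(xt)) dt`. -/
noncomputable def F (x : ℝ) : ℝ :=
  ∫ t in Set.Ioi (0:ℝ), Real.exp (-(3 * x) - t) * g (x * t) ^ 3

/-- A002893 -/
def aa (n : ℕ) : ℕ := ∑ k ∈ Finset.range (n+1), (n.choose k)^2 * ((2*k).choose k)

lemma choose_real_1 (m k : ℕ) :
    ((m.choose k : ℝ)) * ((m:ℝ)+1) = (((m+1).choose k : ℝ)) * ((m:ℝ)+1-k) := by
  rcases le_or_gt k (m+1) with h | h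
  · have h1 := congrArg (Nat.cast : ℕ → ℝ) (Nat.choose_mul_succ_eq m k)
    push_cast [Nat.cast_sub h] at h1
    linarith
  · rw [Nat.choose_eq_zero_of_lt (by omega), Nat.choose_eq_zero_of_lt (by omega)]
    simp

lemma choose_real_2 (m k : ℕ) :
    ((m.choose (k+1) : ℝ)) * ((k:ℝ)+1) = ((m.choose k : ℝ)) * ((m:ℝ)-k) := by
  rcases le_or_gt k m with h | h
  · have h1 := congrArg (Nat.cast : ℕ → ℝ) (Nat.choose_succ_right_eq m k)
    push_cast [Nat.cast_sub h] at h1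
    linarith
  · rw [Nat.choose_eq_zero_of_lt (by omega), Nat.choose_eq_zero_of_lt (by omega)]
    simp

lemma central_real (k : ℕ) :
    (((2*(k+1)).choose (k+1) : ℝ)) * ((k:ℝ)+1) = 2*(2*(k:ℝ)+1) * (((2*k).choose k : ℝ)) := by
  have h1 := congrArg (Nat.cast : ℕ → ℝ) (Nat.succ_mul_centralBinom_succ k)
  simp only [Nat.centralBinom] at h1
  push_cast at h1
  linarith

/-- telescoping certificate -/
noncomputable def Gc (n k : ℕ) : ℝ :=
  (k:ℝ)^3*(3*(k:ℝ)-4*((n:ℝ)+2)) * (((n+2).choose k : ℝ))^2 * (((2*k).choose k : ℝ))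

lemma tele (n k : ℕ) :
    ((n:ℝ)+2)^2 * ( ((n:ℝ)+2)^2 * ((((n+2).choose k : ℝ))^2 * (((2*k).choose k : ℝ)))
      - (10*(n:ℝ)^2+30*(n:ℝ)+23) * ((((n+1).choose k : ℝ))^2 * (((2*k).choose k : ℝ)))
      + 9*((n:ℝ)+1)^2 * (((n.choose k : ℝ))^2 * (((2*k).choose k : ℝ))) )
    = Gc n (k+1) - Gc n k := by
  set A : ℝ := ((n+2).choose k : ℝ) with hA
  set B : ℝ := ((2*k).choose k : ℝ) with hB
  set b : ℝ := ((n+1).choose k : ℝ) with hb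
  set c : ℝ := ((n).choose k : ℝ) with hc
  set A' : ℝ := ((n+2).choose (k+1) : ℝ) with hA'
  set B' : ℝ := ((2*(k+1)).choose (k+1) : ℝ) with hB'
  have h1 : b * ((n:ℝ)+2) = A * ((n:ℝ)+2-k) := by
    have := choose_real_1 (n+1) k; push_cast at this ⊢; linarith
  have h0 : c * ((n:ℝ)+1) = b * ((n:ℝ)+1-k) := by
    have := choose_real_1 n k; push_cast at this ⊢; linarith
  have h3 : A' * ((k:ℝ)+1) = A * ((n:ℝ)+2-k) := by
    have := choose_real_2 (n+2) k; push_cast at this ⊢; linarith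
  have h4 : B' * ((k:ℝ)+1) = 2*(2*(k:ℝ)+1) * B := central_real k
  have hGc1 : Gc n (k+1) = ((k:ℝ)+1)^3*(3*((k:ℝ)+1)-4*((n:ℝ)+2)) * A'^2 * B' := by
    simp only [Gc, hA', hB']; push_cast; ring
  have hGc0 : Gc n k = (k:ℝ)^3*(3*(k:ℝ)-4*((n:ℝ)+2)) * A^2 * B := rfl
  rw [hGc1, hGc0]
  linear_combination
    (9*B*((n:ℝ)+2)^2*(c*((n:ℝ)+1)+b*((n:ℝ)+1-k))) * h0
    + ((9*((n:ℝ)+1-k)^2 - (10*(n:ℝ)^2+30*(n:ℝ)+23))*B*(b*((n:ℝ)+2)+A*((n:ℝ)+2-k))) * h1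
    - ((3*(k:ℝ)-4*(n:ℝ)-5)*2*(2*(k:ℝ)+1)*B*(A'*((k:ℝ)+1)+A*((n:ℝ)+2-k))) * h3
    - ((3*(k:ℝ)-4*(n:ℝ)-5)*((k:ℝ)+1)^2*A'^2) * h4

lemma aa_cast_ext' (n N : ℕ) (h : n < N) :
    (aa n : ℝ) = ∑ k ∈ Finset.range N, ((n.choose k : ℝ))^2 * (((2*k).choose k : ℝ)) := by
  have h1 : (aa n : ℝ) = ∑ k ∈ Finset.range (n+1), ((n.choose k : ℝ))^2 * (((2*k).choose k : ℝ)) := by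
    simp only [aa, Nat.cast_sum, Nat.cast_mul, Nat.cast_pow]
  rw [h1]
  apply Finset.sum_subset (Finset.range_subset_range.2 h)
  intro k _ hk
  rw [Nat.choose_eq_zero_of_lt (by simp at hk; omega)]
  simp

lemma aa_rec (n : ℕ) :
    ((n:ℝ)+2)^2 * (aa (n+2) : ℝ) + 9*((n:ℝ)+1)^2 * (aa n : ℝ)
      = (10*(n:ℝ)^2+30*(n:ℝ)+23) * (aa (n+1) : ℝ) := by
  have key : ((n:ℝ)+2)^2 * ( ((n:ℝ)+2)^2 * (aa (n+2) : ℝ)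
      - (10*(n:ℝ)^2+30*(n:ℝ)+23) * (aa (n+1) : ℝ)
      + 9*((n:ℝ)+1)^2 * (aa n : ℝ) ) = 0 := by
    rw [aa_cast_ext' (n+2) (n+3) (by omega), aa_cast_ext' (n+1) (n+3) (by omega),
      aa_cast_ext' n (n+3) (by omega)]
    push_cast
    rw [Finset.mul_sum, Finset.mul_sum, Finset.mul_sum, ← Finset.sum_sub_distrib,
      ← Finset.sum_add_distrib]
    have step : ((n:ℝ)+2)^2 * ∑ k ∈ Finset.range (n+3),
        (((n:ℝ)+2)^2 * ((((n+2).choose k : ℝ))^2 * (((2*k).choose k : ℝ)))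
        - (10*(n:ℝ)^2+30*(n:ℝ)+23) * ((((n+1).choose k : ℝ))^2 * (((2*k).choose k : ℝ)))
        + 9*((n:ℝ)+1)^2 * (((n.choose k : ℝ))^2 * (((2*k).choose k : ℝ))))
        = ∑ k ∈ Finset.range (n+3), (Gc n (k+1) - Gc n k) := by
      rw [Finset.mul_sum]
      exact Finset.sum_congr rfl (fun k hk => by linear_combination tele n k)
    rw [step, Finset.sum_range_sub (fun k => Gc n k)]
    have hG0 : Gc n 0 = 0 := by simp [Gc]
    have hGtop : Gc n (n+3) = 0 := by
      simp [Gc, Nat.choose_eq_zero_of_lt (by omega : n+2 < n+3)]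
    rw [hG0, hGtop]
    ring
  have h2 : ((n:ℝ)+2)^2 ≠ 0 := by positivity
  have := mul_eq_zero.1 key
  rcases this with h | h
  · exact absurd h h2
  · linarith

noncomputable def cc (n : ℕ) : ℝ := (aa n : ℝ) / n.factorial

lemma cc_nonneg (n : ℕ) : 0 ≤ cc n := by unfold cc; positivity

lemma cast_lt_two_pow (n : ℕ) : (n:ℝ) < 2^n := by
  exact_mod_cast Nat.lt_two_pow_self

lemma one_le_two_pow_real (n : ℕ) : (1:ℝ) ≤ 2^n := one_le_pow₀ (by norm_num)

lemma choose_le_two_pow (m k : ℕ) : m.choose k ≤ 2^m := by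
  rcases le_or_gt k m with h | h
  · calc m.choose k ≤ ∑ j ∈ Finset.range (m+1), m.choose j :=
          Finset.single_le_sum (fun j _ => Nat.zero_le _) (Finset.mem_range.2 (by omega))
    _ = 2^m := Nat.sum_range_choose m
  · rw [Nat.choose_eq_zero_of_lt h]; positivity

lemma aa_le (n : ℕ) : (aa n : ℝ) ≤ 2 * 32^n := by
  have h1 : (aa n : ℝ) ≤ (n+1) * 16^n := by
    have hb : ∀ k ∈ Finset.range (n+1), ((n.choose k)^2 * ((2*k).choose k) : ℝ) ≤ 16^n := by
      intro k hk
      have h2 : (n.choose k : ℝ) ≤ 2^n := by exact_mod_cast choose_le_two_pow n k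
      have h3 : ((2*k).choose k : ℝ) ≤ 4^n := by
        calc ((2*k).choose k : ℝ) ≤ 2^(2*k) := by exact_mod_cast choose_le_two_pow (2*k) k
        _ ≤ 2^(2*n) := by
          apply pow_le_pow_right₀ (by norm_num)
          simp at hk; omega
        _ = 4^n := by rw [pow_mul]; norm_num
      have h4 : ((2:ℝ)^n)^2 = 4^n := by
        rw [← pow_mul, mul_comm, pow_mul]; norm_num
      calc ((n.choose k)^2 * ((2*k).choose k) : ℝ) ≤ (2^n)^2 * 4^n := by
            apply mul_le_mul _ h3 (by positivity) (by positivity)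
            exact pow_le_pow_left₀ (by positivity) h2 2
      _ = 4^n * 4^n := by rw [h4]
      _ = 16^n := by rw [← mul_pow]; norm_num
    calc (aa n : ℝ) = ∑ k ∈ Finset.range (n+1), ((n.choose k)^2 * ((2*k).choose k) : ℝ) := by
          simp only [aa, Nat.cast_sum, Nat.cast_mul, Nat.cast_pow]
    _ ≤ ∑ k ∈ Finset.range (n+1), (16:ℝ)^n := Finset.sum_le_sum hb
    _ = (n+1) * 16^n := by rw [Finset.sum_const, Finset.card_range]; push_cast; ring
  calc (aa n : ℝ) ≤ (n+1) * 16^n := h1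
  _ ≤ 2*2^n * 16^n := by
    have h5 := cast_lt_two_pow n
    have h6 := one_le_two_pow_real n
    have h7 : ((n:ℝ)+1) ≤ 2*2^n := by linarith
    nlinarith [pow_pos (by norm_num : (0:ℝ) < 16) n]
  _ = 2 * 32^n := by rw [mul_assoc, ← mul_pow]; norm_num

/-- power series coefficients with everywhere-convergent series -/
def Good (d : ℕ → ℝ) : Prop := ∀ r : ℝ, 0 ≤ r → Summable (fun n => |d n| * r^n)

lemma good_cc : Good cc := by
  intro r hr
  refine Summable.of_nonneg_of_le (fun n => by positivity) (fun n => ?_)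
    ((Real.summable_pow_div_factorial (32*r)).mul_left 2)
  have h1 : |cc n| = cc n := abs_of_nonneg (cc_nonneg n)
  rw [h1, cc]
  rw [div_mul_eq_mul_div, div_le_iff₀ (by positivity : (0:ℝ) < (n.factorial:ℝ))]
  have h3 : 2 * ((32*r)^n / n.factorial) * n.factorial = 2 * (32^n * r^n) := by
    field_simp [mul_pow]
    rw [mul_pow]
  rw [h3]
  have := aa_le n
  have h2 : (0:ℝ) ≤ r^n := by positivity
  nlinarith

lemma good_summable {d : ℕ → ℝ} (hd : Good d) (x : ℝ) : Summable (fun n => d n * x^n) := by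
  apply Summable.of_norm_bounded (hd |x| (abs_nonneg x))
  intro n
  rw [Real.norm_eq_abs, abs_mul, abs_pow]

noncomputable def der (d : ℕ → ℝ) : ℕ → ℝ := fun n => ((n:ℝ)+1) * d (n+1)

lemma good_der {d : ℕ → ℝ} (hd : Good d) : Good (der d) := by
  intro r hr
  refine Summable.of_nonneg_of_le (fun n => by positivity) (fun n => ?_)
    ((((summable_nat_add_iff 1).2 (hd (2*r+1) (by linarith)))).mul_left 2)
  have h1 : |der d n| = ((n:ℝ)+1) * |d (n+1)| := by
    rw [der, abs_mul, abs_of_nonneg (by positivity : (0:ℝ) ≤ (n:ℝ)+1)]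
  rw [h1]
  have h2 : ((n:ℝ)+1) * r^n ≤ 2 * (2*r+1)^(n+1) := by
    have hn : ((n:ℝ)+1) ≤ 2*2^n := by
      have := cast_lt_two_pow n; have := one_le_two_pow_real n; linarith
    have hrn : r^n ≤ (2*r+1)^n / 2^n := by
      rw [le_div_iff₀ (show (0:ℝ) < 2^n by positivity), ← mul_pow]
      exact pow_le_pow_left₀ (by linarith) (by linarith) n
    calc ((n:ℝ)+1) * r^n ≤ 2*2^n * ((2*r+1)^n / 2^n) := by
          apply mul_le_mul hn hrn (by positivity) (by positivity)
    _ = 2 * (2*r+1)^n := by field_simp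
    _ ≤ 2 * (2*r+1)^(n+1) := by
          have h8 : (1:ℝ) ≤ 2*r+1 := by linarith
          have h9 := pow_le_pow_right₀ h8 (by omega : n ≤ n+1)
          linarith
  calc ((n:ℝ)+1) * |d (n+1)| * r^n = |d (n+1)| * (((n:ℝ)+1) * r^n) := by ring
  _ ≤ |d (n+1)| * (2 * (2*r+1)^(n+1)) :=
        mul_le_mul_of_nonneg_left h2 (abs_nonneg _)
  _ = 2 * (|d (n+1)| * (2*r+1)^(n+1)) := by ring

noncomputable def S (d : ℕ → ℝ) (x : ℝ) : ℝ := ∑' n, d n * x^n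

lemma deriv_term_bound (d : ℕ → ℝ) {R y : ℝ} (hR1 : 1 ≤ R) (hy : |y| ≤ R) (n : ℕ) :
    ‖d n * ((n:ℝ) * y^(n-1))‖ ≤ |d n| * (2*R)^n := by
  rw [Real.norm_eq_abs, abs_mul, abs_mul, abs_pow]
  have h1 : (|(n:ℝ)|) * |y|^(n-1) ≤ 2^n * R^n := by
    rcases Nat.eq_zero_or_pos n with h | h
    · subst h; simp
    · rw [abs_of_nonneg (by positivity : (0:ℝ) ≤ (n:ℝ))]
      have h2 : (n:ℝ) ≤ 2^n := (cast_lt_two_pow n).le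
      have h3 : |y|^(n-1) ≤ R^n := by
        calc |y|^(n-1) ≤ R^(n-1) := pow_le_pow_left₀ (abs_nonneg y) hy _
        _ ≤ R^n := pow_le_pow_right₀ hR1 (by omega)
      apply mul_le_mul h2 h3 (by positivity) (by positivity)
  calc |d n| * (|(n:ℝ)| * |y|^(n-1)) ≤ |d n| * (2^n * R^n) :=
        mul_le_mul_of_nonneg_left h1 (abs_nonneg _)
  _ = |d n| * (2*R)^n := by rw [mul_pow]

lemma hasDerivAt_S {d : ℕ → ℝ} (hd : Good d) (x : ℝ) :
    HasDerivAt (S d) (S (der d) x) x := by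
  set R : ℝ := |x| + 1 with hR
  have hax := abs_nonneg x
  have hR1 : (1:ℝ) ≤ R := by simp only [hR]; linarith
  have hR0 : (0:ℝ) < R := by linarith
  have hu : Summable (fun n => |d n| * (2*R)^n) := hd (2*R) (by linarith)
  have key : HasDerivAt (fun z => ∑' n, d n * z^n) (∑' n, d n * ((n:ℝ) * x^(n-1))) x := by
    apply hasDerivAt_tsum_of_isPreconnected hu Metric.isOpen_ball
      ((convex_ball (0:ℝ) R).isPreconnected)
      (g := fun n z => d n * z^n) (g' := fun n z => d n * ((n:ℝ) * z^(n-1))) (y₀ := 0)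
    · intro n y _
      exact (hasDerivAt_pow n y).const_mul (d n)
    · intro n y hy
      have hy' : |y| ≤ R := by
        have : dist y 0 < R := hy
        rw [Real.dist_eq, sub_zero] at this; linarith
      exact deriv_term_bound d hR1 hy' n
    · simpa using hR0
    · apply Summable.of_norm_bounded (hd 1 zero_le_one)
      intro n
      rcases n with _ | m
      · simp
      · rw [zero_pow (Nat.succ_ne_zero m), mul_zero, norm_zero, one_pow, mul_one]
        exact abs_nonneg _
    · have : dist x 0 < R := by rw [Real.dist_eq, sub_zero, hR]; linarith
      simpa using this
  have hsum : Summable (fun n => d n * ((n:ℝ) * x^(n-1))) := by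
    apply Summable.of_norm_bounded hu
    exact deriv_term_bound d hR1 (by linarith) 
  have heq : ∑' n, d n * ((n:ℝ) * x^(n-1)) = S (der d) x := by
    rw [Summable.tsum_eq_zero_add hsum]
    simp only [Nat.cast_zero, zero_mul, mul_zero, zero_add]
    exact tsum_congr fun n => by
      simp only [der, Nat.add_sub_cancel]
      push_cast
      ring
  rw [← heq]
  exact key

noncomputable def sh (d : ℕ → ℝ) : ℕ → ℝ := fun n => match n with
  | 0 => 0
  | (m+1) => d m

lemma good_sh {d : ℕ → ℝ} (hd : Good d) : Good (sh d) := by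
  intro r hr
  rw [← summable_nat_add_iff 1]
  simp only [sh]
  exact ((hd r hr).mul_right r).congr (fun n => by rw [pow_succ]; ring)

lemma S_sh {d : ℕ → ℝ} (hd : Good d) (x : ℝ) : S (sh d) x = x * S d x := by
  rw [S, Summable.tsum_eq_zero_add (good_summable (good_sh hd) x)]
  simp only [sh, pow_zero, mul_one, zero_add]
  rw [S, ← tsum_mul_left]
  exact tsum_congr fun n => by rw [pow_succ]; ring

lemma cc_one : cc 1 = 3 * cc 0 := by
  have h0 : aa 0 = 1 := by decide
  have h1 : aa 1 = 3 := by decide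
  simp [cc, h0, h1, Nat.factorial]

lemma cc_rec (n : ℕ) :
    ((n:ℝ)+2)^3 * cc (n+2) + 9*((n:ℝ)+1) * cc n
      = (10*(n:ℝ)^2+30*(n:ℝ)+23) * cc (n+1) := by
  have h := aa_rec n
  have hf0 : ((n.factorial : ℝ)) ≠ 0 := Nat.cast_ne_zero.2 (Nat.factorial_ne_zero n)
  have e2 : ((n+2).factorial : ℝ) = ((n:ℝ)+2) * (((n:ℝ)+1) * n.factorial) := by
    rw [Nat.factorial_succ, Nat.factorial_succ]; push_cast; ring
  have e1 : ((n+1).factorial : ℝ) = ((n:ℝ)+1) * n.factorial := by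
    rw [Nat.factorial_succ]; push_cast; ring
  have hne : (((n:ℝ)+1) * n.factorial) ≠ 0 := by positivity
  have c2 : cc (n+2) * (((n:ℝ)+2) * (((n:ℝ)+1) * n.factorial)) = (aa (n+2) : ℝ) := by
    simp only [cc, e2]; field_simp
  have c1 : cc (n+1) * (((n:ℝ)+1) * n.factorial) = (aa (n+1) : ℝ) := by
    simp only [cc, e1]; field_simp
  have c0 : cc n * (n.factorial : ℝ) = (aa n : ℝ) := by
    simp only [cc]; field_simp
  apply mul_right_cancel₀ hne
  linear_combination ((n:ℝ)+2)^2 * c2 + 9*((n:ℝ)+1)^2 * c0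
    - (10*(n:ℝ)^2+30*(n:ℝ)+23) * c1 + h

-- the shifted coefficient combination
noncomputable def WW : ℕ → ℝ := fun n =>
  sh (sh (der (der (der cc)))) n - 10 * sh (sh (der (der cc))) n + 3 * sh (der (der cc)) n
  + 9 * sh (sh (der cc)) n - 20 * sh (der cc) n + der cc n + 9 * sh cc n - 3 * cc n

lemma WW_zero : ∀ n, WW n = 0 := by
  intro n
  match n with
  | 0 =>
    simp only [WW, sh, der]
    push_cast
    have := cc_one
    ring_nf
    linarith
  | 1 =>
    simp only [WW, sh, der]
    push_cast
    have h := cc_rec 0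
    push_cast at h
    ring_nf
    ring_nf at h
    linarith
  | (m+2) =>
    simp only [WW, sh, der]
    push_cast
    have h := cc_rec (m+1)
    push_cast at h
    linear_combination h

lemma S_ode (x : ℝ) :
    x^2 * S (der (der (der cc))) x - 10*x^2 * S (der (der cc)) x + 3*x * S (der (der cc)) x
    + 9*x^2 * S (der cc) x - 20*x * S (der cc) x + S (der cc) x
    + 9*x * S cc x - 3 * S cc x = 0 := by
  have hg0 : Good cc := good_cc
  have hg1 : Good (der cc) := good_der hg0
  have hg2 : Good (der (der cc)) := good_der hg1
  have hg3 : Good (der (der (der cc))) := good_der hg2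
  -- HasSum for each piece
  have H : ∀ {d : ℕ → ℝ}, Good d → HasSum (fun n => d n * x^n) (S d x) :=
    fun hd => (good_summable hd x).hasSum
  have h1 := H (good_sh (good_sh hg3))
  have h2 := H (good_sh (good_sh hg2))
  have h3 := H (good_sh hg2)
  have h4 := H (good_sh (good_sh hg1))
  have h5 := H (good_sh hg1)
  have h6 := H hg1
  have h7 := H (good_sh hg0)
  have h8 := H hg0
  have hcomb := (((((((h1.sub (h2.mul_left 10)).add (h3.mul_left 3)).add
      (h4.mul_left 9)).sub (h5.mul_left 20)).add h6).add (h7.mul_left 9)).sub (h8.mul_left 3))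
  have hzero : HasSum (fun n =>
      (sh (sh (der (der (der cc)))) n * x^n - 10 * (sh (sh (der (der cc))) n * x^n)
        + 3 * (sh (der (der cc)) n * x^n) + 9 * (sh (sh (der cc)) n * x^n)
        - 20 * (sh (der cc) n * x^n) + der cc n * x^n + 9 * (sh cc n * x^n)
        - 3 * (cc n * x^n))) 0 := by
    have : (fun n =>
      (sh (sh (der (der (der cc)))) n * x^n - 10 * (sh (sh (der (der cc))) n * x^n)
        + 3 * (sh (der (der cc)) n * x^n) + 9 * (sh (sh (der cc)) n * x^n)
        - 20 * (sh (der cc) n * x^n) + der cc n * x^n + 9 * (sh cc n * x^n)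
        - 3 * (cc n * x^n))) = fun n => WW n * x^n := by
      funext n; simp only [WW]; ring
    rw [this]
    have : (fun n => WW n * x^n) = fun _ => (0:ℝ) := by
      funext n; rw [WW_zero n, zero_mul]
    rw [this]
    exact hasSum_zero
  have hval := hzero.unique hcomb
  -- hval : 0 = S(shsh g3) - 10 S(shsh g2) + ... 
  have e1 : S (sh (sh (der (der (der cc))))) x = x * (x * S (der (der (der cc))) x) := by
    rw [S_sh (good_sh hg3), S_sh hg3]
  have e2 : S (sh (sh (der (der cc)))) x = x * (x * S (der (der cc)) x) := by
    rw [S_sh (good_sh hg2), S_sh hg2]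
  have e3 : S (sh (der (der cc))) x = x * S (der (der cc)) x := S_sh hg2 x
  have e4 : S (sh (sh (der cc))) x = x * (x * S (der cc) x) := by
    rw [S_sh (good_sh hg1), S_sh hg1]
  have e5 : S (sh (der cc)) x = x * S (der cc) x := S_sh hg1 x
  have e7 : S (sh cc) x = x * S cc x := S_sh hg0 x
  rw [e1, e2, e3, e4, e5, e7] at hval
  linear_combination -hval

lemma fact_sq_ge (k : ℕ) : ((k.factorial : ℝ)) ≤ ((k.factorial : ℝ))^2 := by
  have h1 : (1:ℝ) ≤ (k.factorial : ℝ) := by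
    exact_mod_cast Nat.one_le_iff_ne_zero.2 (Nat.factorial_ne_zero k)
  nlinarith

lemma summable_g_norm (y : ℝ) : Summable (fun k => ‖y^k / ((k.factorial : ℝ))^2‖) := by
  refine Summable.of_nonneg_of_le (fun n => norm_nonneg _) (fun k => ?_)
    (Real.summable_pow_div_factorial |y|)
  rw [Real.norm_eq_abs, abs_div, abs_pow, abs_pow,
    abs_of_nonneg (by positivity : (0:ℝ) ≤ (k.factorial:ℝ))]
  gcongr
  exact fact_sq_ge k

noncomputable def dd (n : ℕ) : ℝ := (((2*n).choose n : ℝ)) / ((n.factorial : ℝ))^2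

lemma dd_nonneg (n : ℕ) : 0 ≤ dd n := by unfold dd; positivity

noncomputable def bb (n : ℕ) : ℝ :=
  ∑ k ∈ Finset.range (n+1), dd k * (1 / (((n-k).factorial : ℝ))^2)

lemma bb_nonneg (n : ℕ) : 0 ≤ bb n := by
  apply Finset.sum_nonneg
  intro k _
  have := dd_nonneg k
  positivity

lemma choose_sq_sum (n : ℕ) : ∑ k ∈ Finset.range (n+1), (n.choose k)^2 = (2*n).choose n := by
  have h := Nat.add_choose_eq n n n
  rw [Finset.Nat.sum_antidiagonal_eq_sum_range_succ_mk] at h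
  rw [two_mul, h]
  apply Finset.sum_congr rfl
  intro k hk
  rw [Nat.choose_symm (by simp at hk; omega : k ≤ n), sq]

lemma hV (n : ℕ) :
    ∑ k ∈ Finset.range (n+1), (1 / ((k.factorial : ℝ))^2) * (1 / (((n-k).factorial : ℝ))^2)
      = dd n := by
  have h1 : ∀ k ∈ Finset.range (n+1),
      (1 / ((k.factorial : ℝ))^2) * (1 / (((n-k).factorial : ℝ))^2)
        = ((n.choose k : ℝ))^2 / ((n.factorial : ℝ))^2 := by
    intro k hk
    have hk' : k ≤ n := by simp at hk; omega
    have h2 : ((k.factorial : ℝ)) ≠ 0 := Nat.cast_ne_zero.2 (Nat.factorial_ne_zero k)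
    have h3 : (((n-k).factorial : ℝ)) ≠ 0 := Nat.cast_ne_zero.2 (Nat.factorial_ne_zero (n-k))
    have h4 : ((n.factorial : ℝ)) ≠ 0 := Nat.cast_ne_zero.2 (Nat.factorial_ne_zero n)
    rw [Nat.cast_choose ℝ hk']
    field_simp
  rw [Finset.sum_congr rfl h1, ← Finset.sum_div, dd]
  congr 1
  rw [← choose_sq_sum]
  push_cast
  rfl

lemma g_eq (y : ℝ) : g y = ∑' k : ℕ, y^k / ((k.factorial : ℝ))^2 := rfl

lemma summable_dd_norm (y : ℝ) : Summable (fun n => ‖dd n * y^n‖) := by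
  refine Summable.of_nonneg_of_le (fun n => norm_nonneg _) (fun n => ?_)
    (Real.summable_pow_div_factorial (4*|y|))
  rw [Real.norm_eq_abs, abs_mul, abs_pow, abs_of_nonneg (dd_nonneg n)]
  have h2 : dd n ≤ 4^n / n.factorial := by
    unfold dd
    have h3 : ((2*n).choose n : ℝ) ≤ (4:ℝ)^n := by
      have h4 : (2*n).choose n ≤ 2^(2*n) := choose_le_two_pow (2*n) n
      have h5 : (2:ℕ)^(2*n) = 4^n := by rw [pow_mul]; norm_num
      exact_mod_cast h5 ▸ h4
    calc ((2*n).choose n : ℝ) / ((n.factorial : ℝ))^2 ≤ (4:ℝ)^n / ((n.factorial : ℝ))^2 := by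
          gcongr
    _ ≤ (4:ℝ)^n / (n.factorial : ℝ) := by
          gcongr
          exact fact_sq_ge n
  calc dd n * |y|^n ≤ (4^n / n.factorial) * |y|^n := by
        apply mul_le_mul_of_nonneg_right h2 (by positivity)
  _ = (4*|y|)^n / n.factorial := by rw [mul_pow]; ring

lemma g_sq (y : ℝ) : g y * g y = ∑' n, dd n * y^n := by
  rw [g_eq, tsum_mul_tsum_eq_tsum_sum_range_of_summable_norm (summable_g_norm y) (summable_g_norm y)]
  apply tsum_congr
  intro n
  have h1 : ∀ k ∈ Finset.range (n+1),
      y^k / ((k.factorial : ℝ))^2 * (y^(n-k) / (((n-k).factorial : ℝ))^2)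
        = y^n * ((1 / ((k.factorial : ℝ))^2) * (1 / (((n-k).factorial : ℝ))^2)) := by
    intro k hk
    have hk' : k ≤ n := by simp at hk; omega
    have hpow : y^k * y^(n-k) = y^n := by rw [← pow_add]; congr 1; omega
    rw [div_mul_div_comm, hpow]
    ring
  rw [Finset.sum_congr rfl h1, ← Finset.mul_sum, hV]
  ring

lemma g_cube (y : ℝ) : g y ^ 3 = ∑' n, bb n * y^n := by
  have h1 : g y ^ 3 = (g y * g y) * g y := by ring
  rw [h1, g_sq, g_eq,
    tsum_mul_tsum_eq_tsum_sum_range_of_summable_norm (summable_dd_norm y) (summable_g_norm y)]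
  apply tsum_congr
  intro n
  rw [bb, Finset.sum_mul]
  apply Finset.sum_congr rfl
  intro k hk
  have hk' : k ≤ n := by simp at hk; omega
  have hpow : y^k * y^(n-k) = y^n := by rw [← pow_add]; congr 1; omega
  calc dd k * y^k * (y^(n-k) / (((n-k).factorial : ℝ))^2)
      = dd k * (1/(((n-k).factorial : ℝ))^2) * (y^k * y^(n-k)) := by ring
  _ = dd k * (1/(((n-k).factorial : ℝ))^2) * y^n := by rw [hpow]

lemma bb_fact (n : ℕ) : bb n * ((n.factorial : ℝ)) = cc n := by
  have key : bb n * ((n.factorial : ℝ))^2 = (aa n : ℝ) := by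
    rw [bb, Finset.sum_mul]
    have h1 : ∀ k ∈ Finset.range (n+1),
        dd k * (1 / (((n-k).factorial : ℝ))^2) * ((n.factorial : ℝ))^2
          = ((n.choose k : ℝ))^2 * (((2*k).choose k : ℝ)) := by
      intro k hk
      have hk' : k ≤ n := by simp at hk; omega
      have h2 : ((k.factorial : ℝ)) ≠ 0 := Nat.cast_ne_zero.2 (Nat.factorial_ne_zero k)
      have h3 : (((n-k).factorial : ℝ)) ≠ 0 := Nat.cast_ne_zero.2 (Nat.factorial_ne_zero (n-k))
      rw [dd, Nat.cast_choose ℝ hk']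
      field_simp
    rw [Finset.sum_congr rfl h1]
    simp only [aa, Nat.cast_sum, Nat.cast_mul, Nat.cast_pow]
  have hf : ((n.factorial : ℝ)) ≠ 0 := Nat.cast_ne_zero.2 (Nat.factorial_ne_zero n)
  rw [cc, ← key]
  field_simp

lemma integrable_exp_pow (n : ℕ) :
    IntegrableOn (fun t : ℝ => Real.exp (-t) * t^n) (Set.Ioi 0) := by
  have h := Real.GammaIntegral_convergent (s := (n:ℝ)+1) (by positivity)
  apply h.congr_fun ?_ measurableSet_Ioi
  intro x hx
  have h5 : ((n:ℝ)+1-1) = (n:ℝ) := by ring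
  simp only [h5, Real.rpow_natCast]

lemma integral_exp_pow (n : ℕ) :
    ∫ t in Set.Ioi (0:ℝ), Real.exp (-t) * t^n = (n.factorial : ℝ) := by
  have h1 := Real.Gamma_eq_integral (s := (n:ℝ)+1) (by positivity)
  have h2 : Real.Gamma ((n:ℝ)+1) = (n.factorial : ℝ) := Real.Gamma_nat_eq_factorial n
  rw [← h2, h1]
  apply setIntegral_congr_fun measurableSet_Ioi
  intro x hx
  have h5 : ((n:ℝ)+1-1) = (n:ℝ) := by ring
  simp only [h5, Real.rpow_natCast]

lemma H_integral (x : ℝ) (hx : 0 ≤ x) :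
    ∫ t in Set.Ioi (0:ℝ), Real.exp (-t) * g (x*t)^3 = S cc x := by
  set fn : ℕ → ℝ → ℝ := fun n t => (bb n * x^n) * (Real.exp (-t) * t^n) with hfn
  have hpt : ∀ t : ℝ, Real.exp (-t) * g (x*t)^3 = ∑' n, fn n t := by
    intro t
    rw [g_cube (x*t), ← tsum_mul_left]
    apply tsum_congr
    intro n
    simp only [hfn, mul_pow]
    ring
  have hint : ∀ n, IntegrableOn (fun t => fn n t) (Set.Ioi 0) := by
    intro n
    exact (integrable_exp_pow n).const_mul (bb n * x^n)
  have hval : ∀ n, ∫ t in Set.Ioi (0:ℝ), fn n t = cc n * x^n := by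
    intro n
    simp only [hfn]
    rw [integral_const_mul, integral_exp_pow]
    linear_combination x^n * bb_fact n
  have hnn : ∀ n, 0 ≤ᵐ[volume.restrict (Set.Ioi (0:ℝ))] fun t => fn n t := by
    intro n
    filter_upwards [ae_restrict_mem measurableSet_Ioi] with t ht
    have ht' : (0:ℝ) < t := ht
    have h1 := bb_nonneg n
    simp only [hfn]
    positivity
  have hmeas : ∀ n, AEStronglyMeasurable (fun t => fn n t) (volume.restrict (Set.Ioi (0:ℝ))) := by
    intro n
    apply Continuous.aestronglyMeasurable
    continuity
  have hlin : ∀ n, ∫⁻ t in Set.Ioi (0:ℝ), ‖fn n t‖₊ = ENNReal.ofReal (cc n * x^n) := by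
    intro n
    have e1 : ∫⁻ t in Set.Ioi (0:ℝ), ‖fn n t‖₊
        = ∫⁻ t in Set.Ioi (0:ℝ), ENNReal.ofReal (fn n t) := by
      apply lintegral_congr_ae
      filter_upwards [hnn n] with t ht
      exact Real.enorm_eq_ofReal ht
    rw [e1, ← ofReal_integral_eq_lintegral_ofReal (hint n) (hnn n), hval]
  have hne : ∑' n, ∫⁻ t in Set.Ioi (0:ℝ), ‖fn n t‖₊ ≠ ⊤ := by
    have e2 : ∑' n, ∫⁻ t in Set.Ioi (0:ℝ), ‖fn n t‖₊ = ENNReal.ofReal (S cc x) := by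
      rw [tsum_congr hlin, ← ENNReal.ofReal_tsum_of_nonneg
        (fun n => mul_nonneg (cc_nonneg n) (by positivity)) (good_summable good_cc x)]
      rfl
    rw [e2]
    exact ENNReal.ofReal_ne_top
  calc ∫ t in Set.Ioi (0:ℝ), Real.exp (-t) * g (x*t)^3
      = ∫ t in Set.Ioi (0:ℝ), ∑' n, fn n t := by
        apply integral_congr_ae
        exact .of_forall hpt
  _ = ∑' n, ∫ t in Set.Ioi (0:ℝ), fn n t := integral_tsum hmeas hne
  _ = ∑' n, cc n * x^n := tsum_congr hval
  _ = S cc x := rfl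

lemma F_eq (x : ℝ) (hx : 0 ≤ x) : F x = Real.exp (-(3*x)) * S cc x := by
  rw [F, ← H_integral x hx, ← integral_const_mul]
  apply integral_congr_ae
  apply Filter.Eventually.of_forall
  intro t
  simp only [sub_eq_add_neg, Real.exp_add]
  ring

noncomputable def Gf : ℝ → ℝ := fun y => Real.exp (-(3*y)) * S cc y
noncomputable def G1 : ℝ → ℝ := fun y =>
  Real.exp (-(3*y)) * (S (der cc) y - 3 * S cc y)
noncomputable def G2 : ℝ → ℝ := fun y =>
  Real.exp (-(3*y)) * (S (der (der cc)) y - 6 * S (der cc) y + 9 * S cc y)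
noncomputable def G3 : ℝ → ℝ := fun y =>
  Real.exp (-(3*y)) * (S (der (der (der cc))) y - 9 * S (der (der cc)) y
    + 27 * S (der cc) y - 27 * S cc y)

lemma hasDerivAt_exp3 (y : ℝ) :
    HasDerivAt (fun z : ℝ => Real.exp (-(3*z))) (Real.exp (-(3*y)) * (-3)) y := by
  have e : (fun z : ℝ => -(3*z)) = fun z : ℝ => -3 * z := by funext z; ring
  have h0 : HasDerivAt (fun z : ℝ => -(3*z)) (-3) y := by
    rw [e]; simpa using (hasDerivAt_id y).const_mul (-3:ℝ)
  exact h0.exp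

lemma hasDerivAt_Gf (y : ℝ) : HasDerivAt Gf (G1 y) y := by
  have h := (hasDerivAt_exp3 y).mul (hasDerivAt_S good_cc y)
  refine h.congr_deriv ?_
  simp only [G1]
  ring

lemma hasDerivAt_G1 (y : ℝ) : HasDerivAt G1 (G2 y) y := by
  have hin : HasDerivAt (fun z => S (der cc) z - 3 * S cc z)
      (S (der (der cc)) y - 3 * S (der cc) y) y :=
    (hasDerivAt_S (good_der good_cc) y).sub ((hasDerivAt_S good_cc y).const_mul 3)
  have h := (hasDerivAt_exp3 y).mul hin
  refine h.congr_deriv ?_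
  simp only [G2]
  ring

lemma hasDerivAt_G2 (y : ℝ) : HasDerivAt G2 (G3 y) y := by
  have hin : HasDerivAt (fun z => S (der (der cc)) z - 6 * S (der cc) z + 9 * S cc z)
      (S (der (der (der cc))) y - 6 * S (der (der cc)) y + 9 * S (der cc) y) y :=
    ((hasDerivAt_S (good_der (good_der good_cc)) y).sub
      ((hasDerivAt_S (good_der good_cc) y).const_mul 6)).add
      ((hasDerivAt_S good_cc y).const_mul 9)
  have h := (hasDerivAt_exp3 y).mul hin
  refine h.congr_deriv ?_
  simp only [G3]
  ring

/-- `F` is three times differentiable on `(0,∞)` and is annihilated there by the operator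
`x²D³ − (x²−3x)D² − (24x²+2x−1)D − (36x²+24x)`. -/
theorem integral_annihilated :
    ∀ x ∈ Set.Ioi (0:ℝ),
      DifferentiableAt ℝ F x ∧ DifferentiableAt ℝ (deriv F) x ∧
      DifferentiableAt ℝ (deriv (deriv F)) x ∧
      x ^ 2 * deriv (deriv (deriv F)) x - (x ^ 2 - 3 * x) * deriv (deriv F) x -
        (24 * x ^ 2 + 2 * x - 1) * deriv F x - (36 * x ^ 2 + 24 * x) * F x = 0 := by
  have hFG : ∀ x ∈ Set.Ioi (0:ℝ), F =ᶠ[nhds x] Gf := fun x hx =>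
    Filter.eventuallyEq_of_mem (isOpen_Ioi.mem_nhds hx)
      (fun y hy => F_eq y (le_of_lt hy))
  have hderivF : ∀ y ∈ Set.Ioi (0:ℝ), deriv F y = G1 y := fun y hy =>
    ((hFG y hy).deriv_eq).trans (hasDerivAt_Gf y).deriv
  have hFG1 : ∀ x ∈ Set.Ioi (0:ℝ), deriv F =ᶠ[nhds x] G1 := fun x hx =>
    Filter.eventuallyEq_of_mem (isOpen_Ioi.mem_nhds hx) hderivF
  have hderivF2 : ∀ y ∈ Set.Ioi (0:ℝ), deriv (deriv F) y = G2 y := fun y hy =>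
    ((hFG1 y hy).deriv_eq).trans (hasDerivAt_G1 y).deriv
  have hFG2 : ∀ x ∈ Set.Ioi (0:ℝ), deriv (deriv F) =ᶠ[nhds x] G2 := fun x hx =>
    Filter.eventuallyEq_of_mem (isOpen_Ioi.mem_nhds hx) hderivF2
  have hderivF3 : ∀ y ∈ Set.Ioi (0:ℝ), deriv (deriv (deriv F)) y = G3 y := fun y hy =>
    ((hFG2 y hy).deriv_eq).trans (hasDerivAt_G2 y).deriv
  intro x hx
  refine ⟨?_, ?_, ?_, ?_⟩
  · exact (hFG x hx).differentiableAt_iff.2 (hasDerivAt_Gf x).differentiableAt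
  · exact (hFG1 x hx).differentiableAt_iff.2 (hasDerivAt_G1 x).differentiableAt
  · exact (hFG2 x hx).differentiableAt_iff.2 (hasDerivAt_G2 x).differentiableAt
  · rw [hderivF3 x hx, hderivF2 x hx, hderivF x hx, F_eq x (le_of_lt hx)]
    simp only [G1, G2, G3]
    linear_combination Real.exp (-(3*x)) * S_ode x
end
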